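/- Let G be an Archimedean lattice-ordered commutative group. If G is additionally equipped with a multiplication making it an f-ring (i.e., x ⊓ y = 0 implies (x·z) ⊓ y = 0 and (z·x) ⊓ y = 0 for z ≥ 0), then the multiplication is commutative. -/

import Mathlib

set_option linter.unusedSectionVars false
set_option maxHeartbeats 1000000

section FRingAux

variable {R : Type*} [Ring R] [Lattice R] [CovariantClass R R (· + ·) (· ≤ ·)]

/-- Left multiplication by a nonnegative element is monotone. -/
private lemma frMulL (hmul : ∀ a b : R, 0 ≤ a → 0 ≤ b → 0 ≤ a * b)
    {x y : R} (z : R) (hz : 0 ≤ z) (h : x ≤ y) : z * x ≤ z * y := by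
  have h0 : 0 ≤ z * (y - x) := hmul z (y - x) hz (sub_nonneg.mpr h)
  rw [mul_sub] at h0
  exact sub_nonneg.mp h0

/-- Right multiplication by a nonnegative element is monotone. -/
private lemma frMulR (hmul : ∀ a b : R, 0 ≤ a → 0 ≤ b → 0 ≤ a * b)
    {x y : R} (z : R) (hz : 0 ≤ z) (h : x ≤ y) : x * z ≤ y * z := by
  have h0 : 0 ≤ (y - x) * z := hmul (y - x) z (sub_nonneg.mpr h) hz
  rw [sub_mul] at h0
  exact sub_nonneg.mp h0

/-- In an f-ring, orthogonal elements have zero product. -/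
private lemma frOrthMul
    (hf : ∀ x y z : R, 0 ≤ z → x ⊓ y = 0 → (x * z) ⊓ y = 0 ∧ (z * x) ⊓ y = 0)
    {x y : R} (h : x ⊓ y = 0) : x * y = 0 := by
  have hx : 0 ≤ x := h ▸ inf_le_left
  have hy : 0 ≤ y := h ▸ inf_le_right
  have h1 : (x * y) ⊓ y = 0 := (hf x y y hy h).1
  have h2 : y ⊓ (x * y) = 0 := by rwa [inf_comm] at h1
  have h3 : (x * y) ⊓ (x * y) = 0 := (hf y (x * y) x hx h2).2
  rwa [inf_idem] at h3

/-- Orthogonality is preserved by multiplying both sides (all four variants). -/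
private lemma frOrth4
    (hf : ∀ x y z : R, 0 ≤ z → x ⊓ y = 0 → (x * z) ⊓ y = 0 ∧ (z * x) ⊓ y = 0)
    {r s : R} (h : r ⊓ s = 0) {z : R} (hz : 0 ≤ z) :
    (r*z) ⊓ (s*z) = 0 ∧ (r*z) ⊓ (z*s) = 0 ∧ (z*r) ⊓ (s*z) = 0 ∧ (z*r) ⊓ (z*s) = 0 := by
  have e1 : (r*z) ⊓ s = 0 := (hf r s z hz h).1
  have e2 : (z*r) ⊓ s = 0 := (hf r s z hz h).2
  have e1' : s ⊓ (r*z) = 0 := by rwa [inf_comm] at e1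
  have e2' : s ⊓ (z*r) = 0 := by rwa [inf_comm] at e2
  have f1 := hf s (r*z) z hz e1'
  have f2 := hf s (z*r) z hz e2'
  exact ⟨by rw [inf_comm]; exact f1.1, by rw [inf_comm]; exact f1.2,
         by rw [inf_comm]; exact f2.1, by rw [inf_comm]; exact f2.2⟩

/-- Subadditivity of the meet for nonnegative elements. -/
private lemma frInfAdd {x y z : R} (hx : 0 ≤ x) (hy : 0 ≤ y) (hz : 0 ≤ z) :
    x ⊓ (y + z) ≤ x ⊓ y + x ⊓ z := by
  have k1 : x ⊓ (y + z) ≤ y + x ⊓ z := by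
    have h1 : x ⊓ (y + z) ≤ y + x :=
      le_trans inf_le_left (le_add_of_nonneg_left hy)
    have h2 : x ⊓ (y + z) ≤ y + z := inf_le_right
    calc x ⊓ (y + z) ≤ (y + x) ⊓ (y + z) := le_inf h1 h2
      _ = y + x ⊓ z := (add_inf x z y).symm
  have k2 : x ⊓ (y + z) - x ⊓ z ≤ y := sub_le_iff_le_add'.mpr (k1.trans (add_comm y _).le)
  have k3 : x ⊓ (y + z) - x ⊓ z ≤ x :=
    le_trans (sub_le_self _ (le_inf hx hz)) inf_le_left
  have k4 : x ⊓ (y + z) - x ⊓ z ≤ x ⊓ y := le_inf k3 k2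
  exact sub_le_iff_le_add.mp k4

/-- The unit of an f-ring is nonnegative. -/
private lemma frOneNonneg (hmul : ∀ a b : R, 0 ≤ a → 0 ≤ b → 0 ≤ a * b)
    (hf : ∀ x y z : R, 0 ≤ z → x ⊓ y = 0 → (x * z) ⊓ y = 0 ∧ (z * x) ⊓ y = 0) :
    (0 : R) ≤ 1 := by
  set t := (1 : R)⁻ with ht
  have ht0 : 0 ≤ t := negPart_nonneg 1
  have horth : t ⊓ (1:R)⁺ = 0 := by
    rw [inf_comm]; exact posPart_inf_negPart_eq_zero 1
  have hts : t * (1:R)⁺ = 0 := frOrthMul hf horth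
  have hteq : t = -(t * t) := by
    have : t * (1:R) = t * ((1:R)⁺ - (1:R)⁻) := by rw [posPart_sub_negPart]
    rw [mul_one, mul_sub, hts, ← ht, zero_sub] at this
    exact this
  have htle : t ≤ 0 := by
    rw [hteq]
    exact neg_nonpos.mpr (hmul t t ht0 ht0)
  have ht00 : t = 0 := le_antisymm htle ht0
  have : (1:R)⁺ - (1:R)⁻ = 1 := posPart_sub_negPart 1
  rw [← ht, ht00, sub_zero] at this
  rw [← this]
  exact posPart_nonneg 1

/-- Smallness of the unbounded tail: `n • (b - n•1)⁺ ≤ b*b`. -/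
private lemma frSmall (hmul : ∀ a b : R, 0 ≤ a → 0 ≤ b → 0 ≤ a * b)
    (hf : ∀ x y z : R, 0 ≤ z → x ⊓ y = 0 → (x * z) ⊓ y = 0 ∧ (z * x) ⊓ y = 0)
    {b : R} (hb : 0 ≤ b) (n : ℕ) : n • ((b - n • (1:R))⁺) ≤ b * b := by
  have h1 : (0:R) ≤ 1 := frOneNonneg hmul hf
  set ξ := b - n • (1:R) with hξ
  have horth : ξ⁺ ⊓ ξ⁻ = 0 := posPart_inf_negPart_eq_zero ξ
  have hβπ : ξ⁺ * ξ⁻ = 0 := frOrthMul hf horth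
  have hle : n • (1:R) - b ≤ ξ⁻ := by
    rw [negPart_def]
    have : -ξ = n • (1:R) - b := by rw [hξ]; abel
    rw [this]
    exact le_sup_left
  have h2 : ξ⁺ * (n • (1:R) - b) ≤ 0 := by
    calc ξ⁺ * (n • (1:R) - b) ≤ ξ⁺ * ξ⁻ := frMulL hmul _ (posPart_nonneg ξ) hle
      _ = 0 := hβπ
  rw [mul_sub] at h2
  have h3 : ξ⁺ * (n • (1:R)) ≤ ξ⁺ * b := sub_nonpos.mp h2
  have h4 : ξ⁺ * (n • (1:R)) = n • ξ⁺ := by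
    rw [mul_smul_comm, mul_one]
  have h5 : ξ⁺ ≤ b := by
    rw [posPart_def]
    refine sup_le ?_ hb
    rw [hξ]
    exact sub_le_self b (nsmul_nonneg h1 n)
  have h6 : ξ⁺ * b ≤ b * b := frMulR hmul b hb h5
  calc n • ξ⁺ = ξ⁺ * (n • (1:R)) := h4.symm
    _ ≤ ξ⁺ * b := h3
    _ ≤ b * b := h6


/-- Shifting by central multiples of one does not change the commutator. -/
private lemma frShift (u v : R) (i j : ℕ) :
    (u - i • (1:R)) * (v - j • (1:R)) - (v - j • (1:R)) * (u - i • (1:R))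
      = u * v - v * u := by
  have ci : ∀ t : R, (i • (1:R)) * t = t * (i • (1:R)) := by
    intro t
    rw [smul_mul_assoc, one_mul, mul_smul_comm, mul_one]
  have cj : ∀ t : R, (j • (1:R)) * t = t * (j • (1:R)) := by
    intro t
    rw [smul_mul_assoc, one_mul, mul_smul_comm, mul_one]
  rw [sub_mul, sub_mul, mul_sub, mul_sub, mul_sub, mul_sub, ci v, cj u, cj (i • (1:R))]
  abel

/-- Four-way splitting bound for a commutator. -/
private lemma frCommLe (hmul : ∀ a b : R, 0 ≤ a → 0 ≤ b → 0 ≤ a * b) (p q : R) :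
    p * q - q * p ≤ |p| * |q| + |q| * |p| := by
  have hp := posPart_sub_negPart p
  have hq := posPart_sub_negPart q
  have hap := posPart_add_negPart p
  have haq := posPart_add_negPart q
  have pp := posPart_nonneg p
  have pn := negPart_nonneg p
  have qp := posPart_nonneg q
  have qn := negPart_nonneg q
  have e1 : (p⁺ + p⁻) * (q⁺ + q⁻)
      = (p⁺ - p⁻) * (q⁺ - q⁻) + ((p⁺ * q⁻ + p⁻ * q⁺) + (p⁺ * q⁻ + p⁻ * q⁺)) := by
    noncomm_ring
  have b1 : p * q ≤ |p| * |q| := by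
    rw [← hap, ← haq, e1, hp, hq]
    exact le_add_of_nonneg_right
      (add_nonneg (add_nonneg (hmul _ _ pp qn) (hmul _ _ pn qp))
        (add_nonneg (hmul _ _ pp qn) (hmul _ _ pn qp)))
  have e2 : (q⁺ + q⁻) * (p⁺ + p⁻)
      = -((q⁺ - q⁻) * (p⁺ - p⁻)) + ((q⁺ * p⁺ + q⁻ * p⁻) + (q⁺ * p⁺ + q⁻ * p⁻)) := by
    noncomm_ring
  have b2 : -(q * p) ≤ |q| * |p| := by
    rw [← haq, ← hap, e2, hq, hp]
    exact le_add_of_nonneg_right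
      (add_nonneg (add_nonneg (hmul _ _ qp pp) (hmul _ _ qn pn))
        (add_nonneg (hmul _ _ qp pp) (hmul _ _ qn pn)))
  calc p * q - q * p = p * q + -(q * p) := by abel
    _ ≤ |p| * |q| + |q| * |p| := add_le_add b1 b2

/-- The key binary meet absorption lemma. -/
private lemma frBL (hmul : ∀ a b : R, 0 ≤ a → 0 ≤ b → 0 ≤ a * b)
    (hf : ∀ x y z : R, 0 ≤ z → x ⊓ y = 0 → (x * z) ⊓ y = 0 ∧ (z * x) ⊓ y = 0)
    {D X Y Z : R} (hX : 0 ≤ X) (hY : 0 ≤ Y) (hZ : 0 ≤ Z)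
    (h1 : D ≤ X * Z + Z * X) (h2 : D ≤ Y * Z + Z * Y) :
    D ≤ (X ⊓ Y) * Z + Z * (X ⊓ Y) := by
  set W := X ⊓ Y with hW
  have hW0 : 0 ≤ W := le_inf hX hY
  set Rr := X - W with hRr
  set S := Y - W with hS
  have hRr0 : 0 ≤ Rr := sub_nonneg.mpr inf_le_left
  have hS0 : 0 ≤ S := sub_nonneg.mpr inf_le_right
  have hRS : Rr ⊓ S = 0 := by
    rw [hRr, hS, ← inf_sub X Y W, ← hW, sub_self]
  obtain ⟨o1, o2, o3, o4⟩ := frOrth4 hf hRS hZ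
  have hXW : X = W + Rr := by rw [hRr]; abel
  have hYW : Y = W + S := by rw [hS]; abel
  have eX : X * Z + Z * X = (W * Z + Z * W) + (Rr * Z + Z * Rr) := by
    rw [hXW]; noncomm_ring
  have eY : Y * Z + Z * Y = (W * Z + Z * W) + (S * Z + Z * S) := by
    rw [hYW]; noncomm_ring
  have hRZ : 0 ≤ Rr * Z := hmul _ _ hRr0 hZ
  have hZR : 0 ≤ Z * Rr := hmul _ _ hZ hRr0
  have hSZ : 0 ≤ S * Z := hmul _ _ hS0 hZ
  have hZS : 0 ≤ Z * S := hmul _ _ hZ hS0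
  have hmeet1 : (S * Z) ⊓ (Rr * Z + Z * Rr) ≤ 0 := by
    calc (S * Z) ⊓ (Rr * Z + Z * Rr) ≤ (S*Z) ⊓ (Rr*Z) + (S*Z) ⊓ (Z*Rr) :=
          frInfAdd hSZ hRZ hZR
      _ = 0 + 0 := by rw [inf_comm (S*Z) (Rr*Z), o1, inf_comm (S*Z) (Z*Rr), o3]
      _ = 0 := by rw [add_zero]
  have hmeet2 : (Z * S) ⊓ (Rr * Z + Z * Rr) ≤ 0 := by
    calc (Z * S) ⊓ (Rr * Z + Z * Rr) ≤ (Z*S) ⊓ (Rr*Z) + (Z*S) ⊓ (Z*Rr) :=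
          frInfAdd hZS hRZ hZR
      _ = 0 + 0 := by rw [inf_comm (Z*S) (Rr*Z), o2, inf_comm (Z*S) (Z*Rr), o4]
      _ = 0 := by rw [add_zero]
  have hT : (Rr * Z + Z * Rr) ⊓ (S * Z + Z * S) ≤ 0 := by
    calc (Rr * Z + Z * Rr) ⊓ (S * Z + Z * S)
        ≤ (Rr * Z + Z * Rr) ⊓ (S*Z) + (Rr * Z + Z * Rr) ⊓ (Z*S) :=
          frInfAdd (add_nonneg hRZ hZR) hSZ hZS
      _ ≤ 0 + 0 := by
          refine add_le_add ?_ ?_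
          · rw [inf_comm]; exact hmeet1
          · rw [inf_comm]; exact hmeet2
      _ = 0 := by rw [add_zero]
  calc D ≤ (X * Z + Z * X) ⊓ (Y * Z + Z * Y) := le_inf h1 h2
    _ = ((W * Z + Z * W) + (Rr * Z + Z * Rr)) ⊓ ((W * Z + Z * W) + (S * Z + Z * S)) := by
        rw [eX, eY]
    _ = (W * Z + Z * W) + (Rr * Z + Z * Rr) ⊓ (S * Z + Z * S) := by
        rw [add_inf]
    _ ≤ (W * Z + Z * W) + 0 := add_le_add_right hT _
    _ = W * Z + Z * W := add_zero _


/-- Iterated meets of a sequence. -/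
private def infSeq {R : Type*} [Lattice R] (P : ℕ → R) : ℕ → R
  | 0 => P 0
  | (n+1) => infSeq P n ⊓ P (n+1)

private lemma infSeq_le {R : Type*} [Lattice R] (P : ℕ → R) :
    ∀ {M i : ℕ}, i ≤ M → infSeq P M ≤ P i := by
  intro M
  induction M with
  | zero => intro i hi; have : i = 0 := Nat.le_zero.mp hi; subst this; exact le_rfl
  | succ M ih =>
      intro i hi
      rcases eq_or_lt_of_le hi with h | h
      · subst h; exact inf_le_right
      · exact le_trans inf_le_left (ih (Nat.lt_succ_iff.mp h))

private lemma infSeq_nonneg {R : Type*} [Lattice R] [Zero R] {P : ℕ → R}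
    (hP : ∀ i, 0 ≤ P i) : ∀ M, 0 ≤ infSeq P M := by
  intro M
  induction M with
  | zero => exact hP 0
  | succ M ih => exact le_inf ih (hP (M+1))

/-- Meet-chaining: if `D` is below all `P i * Z + Z * P i`, it is below the same
expression with the iterated meet. -/
private lemma frMeetChain {R : Type*} [Ring R] [Lattice R]
    [CovariantClass R R (· + ·) (· ≤ ·)]
    (hmul : ∀ a b : R, 0 ≤ a → 0 ≤ b → 0 ≤ a * b)
    (hf : ∀ x y z : R, 0 ≤ z → x ⊓ y = 0 → (x * z) ⊓ y = 0 ∧ (z * x) ⊓ y = 0)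
    {Z : R} (hZ : 0 ≤ Z) {P : ℕ → R} (hP : ∀ i, 0 ≤ P i) {D : R}
    (hD : ∀ i, D ≤ P i * Z + Z * P i) :
    ∀ M, D ≤ infSeq P M * Z + Z * infSeq P M := by
  intro M
  induction M with
  | zero => exact hD 0
  | succ M ih =>
      exact frBL hmul hf (infSeq_nonneg hP M) (hP (M+1)) hZ ih (hD (M+1))

/-- The grid lemma: an element trapped between `0` and `M • 1` is within `1` of the grid. -/
private lemma frGrid {R : Type*} [Ring R] [Lattice R]
    [CovariantClass R R (· + ·) (· ≤ ·)]
    (hmul : ∀ a b : R, 0 ≤ a → 0 ≤ b → 0 ≤ a * b)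
    (hf : ∀ x y z : R, 0 ≤ z → x ⊓ y = 0 → (x * z) ⊓ y = 0 ∧ (z * x) ⊓ y = 0)
    {u : R} (hu : 0 ≤ u) (M : ℕ) (hM : u ≤ M • (1:R)) :
    infSeq (fun i => |u - i • (1:R)|) M ≤ 1 := by
  have h1 : (0:R) ≤ 1 := frOneNonneg hmul hf
  set P : ℕ → R := fun i => |u - i • (1:R)| with hP
  set A := infSeq P M with hA
  set lam := (A - 1)⁺ with hlam
  have hlam0 : 0 ≤ lam := posPart_nonneg _
  -- key estimate to go one step up the grid
  have est : ∀ i : ℕ, i ≤ M → lam ≤ (u - i • (1:R))⁻ + (u - (i+1) • (1:R))⁺ := by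
    intro i hi
    have hAi : A ≤ P i := infSeq_le P hi
    set m := u - i • (1:R) with hm
    have e0 : lam ≤ (|m| - 1)⁺ := posPart_mono (sub_le_sub_right hAi 1)
    have e1 : |m| = m⁺ + m⁻ := (posPart_add_negPart m).symm
    have e2 : (|m| - 1)⁺ ≤ m⁻ + (m⁺ - 1)⁺ := by
      rw [e1]
      refine sup_le ?_ (add_nonneg (negPart_nonneg m) (posPart_nonneg _))
      have : m⁺ + m⁻ - 1 = m⁻ + (m⁺ - 1) := by abel
      rw [this]
      exact add_le_add_right le_sup_left _
    have e3 : (m⁺ - 1)⁺ = (m - 1)⁺ := by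
      rw [posPart_def m, posPart_def (m-1), sup_sub, zero_sub, posPart_def]
      rw [sup_assoc]
      congr 1
      exact sup_eq_right.mpr (neg_nonpos.mpr h1)
    have e4 : m - 1 = u - (i+1) • (1:R) := by
      rw [hm, succ_nsmul]
      abel
    calc lam ≤ (|m| - 1)⁺ := e0
      _ ≤ m⁻ + (m⁺ - 1)⁺ := e2
      _ = m⁻ + (u - (i+1) • (1:R))⁺ := by rw [e3, e4]
  -- induction along the grid
  have key : ∀ i : ℕ, i ≤ M → lam ≤ (u - i • (1:R))⁺ := by
    intro i
    induction i with
    | zero =>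
        intro _
        have hA0 : A ≤ P 0 := infSeq_le P (Nat.zero_le M)
        have : P 0 = u := by
          rw [hP]; simp only [zero_smul, sub_zero]; exact abs_of_nonneg hu
        have h2 : lam ≤ A⁺ := posPart_mono (sub_le_self A h1)
        have h3 : A⁺ ≤ (P 0)⁺ := posPart_mono hA0
        rw [this] at h3
        rw [posPart_eq_self.mpr hu] at h3
        have h4 : (u - 0 • (1:R))⁺ = u := by
          simp only [zero_smul, sub_zero]; exact posPart_eq_self.mpr hu
        rw [h4]
        exact le_trans h2 h3
    | succ i ih =>
        intro hi
        have hiM : i ≤ M := le_trans (Nat.le_succ i) hi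
        have IH := ih hiM
        set m := u - i • (1:R) with hm
        have hstep := est i hiM
        have split : lam ≤ lam ⊓ m⁻ + lam ⊓ (u - (i+1) • (1:R))⁺ := by
          calc lam = lam ⊓ (m⁻ + (u - (i+1) • (1:R))⁺) := (inf_eq_left.mpr hstep).symm
            _ ≤ lam ⊓ m⁻ + lam ⊓ (u - (i+1) • (1:R))⁺ :=
                frInfAdd hlam0 (negPart_nonneg m) (posPart_nonneg _)
        have z1 : lam ⊓ m⁻ ≤ 0 := by
          calc lam ⊓ m⁻ ≤ m⁺ ⊓ m⁻ := inf_le_inf_right _ IH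
            _ = 0 := posPart_inf_negPart_eq_zero m
        have z2 : lam ⊓ (u - (i+1) • (1:R))⁺ ≤ (u - (i+1) • (1:R))⁺ := inf_le_right
        calc lam ≤ lam ⊓ m⁻ + lam ⊓ (u - (i+1) • (1:R))⁺ := split
          _ ≤ 0 + (u - (i+1) • (1:R))⁺ := add_le_add z1 z2
          _ = (u - (i+1) • (1:R))⁺ := zero_add _
  have hMend : (u - M • (1:R))⁺ = 0 := posPart_eq_zero.mpr (sub_nonpos.mpr hM)
  have : lam = 0 := le_antisymm (by rw [← hMend]; exact key M le_rfl) hlam0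
  have : A - 1 ≤ 0 := by
    calc A - 1 ≤ (A - 1)⁺ := le_posPart _
      _ = 0 := this
  exact sub_nonpos.mp this
/-- Commutators of elements bounded by multiples of the unit are at most `1 + 1`. -/
private lemma frBddComm {R : Type*} [Ring R] [Lattice R]
    [CovariantClass R R (· + ·) (· ≤ ·)]
    (hmul : ∀ a b : R, 0 ≤ a → 0 ≤ b → 0 ≤ a * b)
    (hf : ∀ x y z : R, 0 ≤ z → x ⊓ y = 0 → (x * z) ⊓ y = 0 ∧ (z * x) ⊓ y = 0)
    {u v : R} (hu : 0 ≤ u) (hv : 0 ≤ v) (M : ℕ)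
    (hus : u ≤ M • (1:R)) (hvs : v ≤ M • (1:R)) :
    u * v - v * u ≤ 1 + 1 := by
  set D := u * v - v * u with hD
  set P : ℕ → R := fun i => |u - i • (1:R)| with hPdef
  set Q : ℕ → R := fun j => |v - j • (1:R)| with hQdef
  have hP : ∀ i, 0 ≤ P i := fun i => abs_nonneg _
  have hQ : ∀ j, 0 ≤ Q j := fun j => abs_nonneg _
  have hDij : ∀ i j, D ≤ P i * Q j + Q j * P i := by
    intro i j
    have h := frCommLe hmul (u - i • (1:R)) (v - j • (1:R))
    rwa [frShift] at h
  set A := infSeq P M with hAdef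
  have hA0 : 0 ≤ A := infSeq_nonneg hP M
  have stage1 : ∀ j, D ≤ A * Q j + Q j * A := by
    intro j
    exact frMeetChain hmul hf (hQ j) hP (fun i => hDij i j) M
  set B := infSeq Q M with hBdef
  have hB0 : 0 ≤ B := infSeq_nonneg hQ M
  have stage2 : D ≤ B * A + A * B := by
    refine frMeetChain hmul hf hA0 hQ ?_ M
    intro j
    have := stage1 j
    rwa [add_comm] at this
  have gA : A ≤ 1 := frGrid hmul hf hu M hus
  have gB : B ≤ 1 := frGrid hmul hf hv M hvs
  have hBA : B * A ≤ 1 := by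
    calc B * A ≤ 1 * A := frMulR hmul A hA0 gB
      _ = A := one_mul A
      _ ≤ 1 := gA
  have hAB : A * B ≤ 1 := by
    calc A * B ≤ 1 * B := frMulR hmul B hB0 gA
      _ = B := one_mul B
      _ ≤ 1 := gB
  calc D ≤ B * A + A * B := stage2
    _ ≤ 1 + 1 := add_le_add hBA hAB

/-- Orthogonality is stable under natural scalar multiples. -/
private lemma frOrthNsmul {R : Type*} [Ring R] [Lattice R]
    [CovariantClass R R (· + ·) (· ≤ ·)]
    {x y : R} (h : x ⊓ y = 0) (n : ℕ) : (n • x) ⊓ y = 0 := by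
  have hx : 0 ≤ x := h ▸ inf_le_left
  have hy : 0 ≤ y := h ▸ inf_le_right
  induction n with
  | zero => rw [zero_smul]; exact inf_eq_left.mpr hy
  | succ n ih =>
      have hle : y ⊓ (n • x + x) ≤ 0 := by
        calc y ⊓ (n • x + x) ≤ y ⊓ (n • x) + y ⊓ x :=
              frInfAdd hy (nsmul_nonneg hx n) hx
          _ = 0 + 0 := by rw [inf_comm y (n • x), ih, inf_comm y x, h]
          _ = 0 := add_zero _
      have hge : 0 ≤ y ⊓ (n • x + x) :=
        le_inf hy (add_nonneg (nsmul_nonneg hx n) hx)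
      rw [succ_nsmul, inf_comm]
      exact le_antisymm hle hge

/-- Natural scalars commute with the positive part. -/
private lemma frPosPartNsmul {R : Type*} [Ring R] [Lattice R]
    [CovariantClass R R (· + ·) (· ≤ ·)] (z : R) (n : ℕ) :
    (n • z)⁺ = n • z⁺ := by
  have h0 : z⁺ ⊓ z⁻ = 0 := posPart_inf_negPart_eq_zero z
  have h1 : (n • z⁺) ⊓ z⁻ = 0 := frOrthNsmul h0 n
  have h1' : z⁻ ⊓ (n • z⁺) = 0 := by rwa [inf_comm] at h1
  have h2 : (n • z⁻) ⊓ (n • z⁺) = 0 := frOrthNsmul h1' n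
  have h2' : (n • z⁺) ⊓ (n • z⁻) = 0 := by rwa [inf_comm] at h2
  have hsub : n • z⁺ - n • z⁻ = n • z := by rw [← smul_sub, posPart_sub_negPart]
  -- (P - N)⁺ = P when P ⊓ N = 0
  have : (n • z)⁺ = (n • z⁺ - n • z⁻) ⊔ 0 := by rw [hsub, posPart_def]
  rw [this]
  have e1 : (n • z⁺ - n • z⁻) ⊔ 0 = (n • z⁺ - n • z⁻) ⊔ (n • z⁺ - n • z⁺) := by
    rw [sub_self]
  rw [e1, ← sub_inf, inf_comm, h2', sub_zero]
end FRingAux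
private lemma frDecomp {R : Type*} [Ring R] (a1 a2 b1 b2 : R) :
    (a1 + a2) * (b1 + b2) - (b1 + b2) * (a1 + a2)
      = ((a1 * b2 - b2 * a1) + (a2 * b1 - b1 * a2) + (a2 * b2 - b2 * a2))
        + (a1 * b1 - b1 * a1) := by
  noncomm_ring

/-- An Archimedean lattice-ordered (additively commutative) group equipped with a
multiplication making it an f-ring has commutative multiplication. -/
theorem stmt_3 {R : Type*} [Ring R] [Lattice R]
    [CovariantClass R R (· + ·) (· ≤ ·)]
    (hmul : ∀ a b : R, 0 ≤ a → 0 ≤ b → 0 ≤ a * b)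
    (harch : ∀ a b : R, (∀ n : ℕ, n • a ≤ b) → a ≤ 0)
    (hf : ∀ x y z : R, 0 ≤ z → x ⊓ y = 0 → (x * z) ⊓ y = 0 ∧ (z * x) ⊓ y = 0) :
    ∀ x y : R, x * y = y * x := by
  have h1 : (0:R) ≤ 1 := frOneNonneg hmul hf
  -- Step 1: commutators of bounded nonnegative elements are ≤ 0.
  have key : ∀ (a b : R) (P Q : ℕ), 0 ≤ a → 0 ≤ b → a ≤ P • (1:R) → b ≤ Q • (1:R) →
      a * b - b * a ≤ 0 := by
    intro a b P Q ha hb hPa hQb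
    set z := a * b - b * a with hz
    have hz2 : ∀ N : ℕ, (N * N) • z ≤ 1 + 1 := by
      intro N
      have hNz : (N • a) * (N • b) - (N • b) * (N • a) = (N * N) • z := by
        rw [hz, smul_sub, smul_mul_smul_comm, smul_mul_smul_comm]
      set M := N * (P + Q) with hM
      have hua : N • a ≤ M • (1:R) := by
        calc N • a ≤ N • (P • (1:R)) := nsmul_le_nsmul_right hPa N
          _ = (N * P) • (1:R) := by rw [smul_smul]
          _ ≤ M • (1:R) := nsmul_le_nsmul_left h1
              (by rw [hM]; exact Nat.mul_le_mul_left N (Nat.le_add_right P Q))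
      have hub : N • b ≤ M • (1:R) := by
        calc N • b ≤ N • (Q • (1:R)) := nsmul_le_nsmul_right hQb N
          _ = (N * Q) • (1:R) := by rw [smul_smul]
          _ ≤ M • (1:R) := nsmul_le_nsmul_left h1
              (by rw [hM]; exact Nat.mul_le_mul_left N (Nat.le_add_left Q P))
      have := frBddComm hmul hf (nsmul_nonneg ha N) (nsmul_nonneg hb N) M hua hub
      rwa [hNz] at this
    have harchz : ∀ n : ℕ, n • z ≤ 1 + 1 := by
      intro n
      have hnn : n ≤ n * n := by
        cases n with
        | zero => exact le_rfl
        | succ k => exact Nat.le_mul_of_pos_left _ (Nat.succ_pos k)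
      calc n • z ≤ n • z⁺ := nsmul_le_nsmul_right (le_posPart z) n
        _ ≤ (n * n) • z⁺ := nsmul_le_nsmul_left (posPart_nonneg z) hnn
        _ = ((n * n) • z)⁺ := (frPosPartNsmul z (n*n)).symm
        _ ≤ (1 + 1 : R)⁺ := posPart_mono (hz2 n)
        _ = (1 + 1 : R) := posPart_eq_self.mpr (add_nonneg h1 h1)
    exact harch z (1 + 1) harchz
  -- Step 2: bounded nonnegative elements commute.
  have keyEq : ∀ (a b : R) (P Q : ℕ), 0 ≤ a → 0 ≤ b → a ≤ P • (1:R) → b ≤ Q • (1:R) →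
      a * b = b * a := by
    intro a b P Q ha hb hPa hQb
    have h1' := key a b P Q ha hb hPa hQb
    have h2' := key b a Q P hb ha hQb hPa
    have := sub_nonpos.mp h1'
    exact le_antisymm (sub_nonpos.mp h1') (sub_nonpos.mp h2')
  -- Step 3: all nonnegative elements commute (truncation + Archimedean).
  have hmain : ∀ a b : R, 0 ≤ a → 0 ≤ b → a * b - b * a ≤ 0 := by
    intro a b ha hb
    set c := a * b - b * a with hc
    refine harch c (a * (b * b) + ((a * a) * b + (a * a) * b)) ?_
    intro n
    set an := a ⊓ n • (1:R) with han
    set bn := b ⊓ n • (1:R) with hbn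
    set al := (a - n • (1:R))⁺ with hal
    set be := (b - n • (1:R))⁺ with hbe
    have han0 : 0 ≤ an := le_inf ha (nsmul_nonneg h1 n)
    have hbn0 : 0 ≤ bn := le_inf hb (nsmul_nonneg h1 n)
    have hal0 : 0 ≤ al := posPart_nonneg _
    have hbe0 : 0 ≤ be := posPart_nonneg _
    have hsplit : ∀ x : R, x ⊓ n • (1:R) + (x - n • (1:R))⁺ = x := by
      intro x
      have e : (x - n • (1:R)) ⊔ (0:R) = (x ⊔ n • (1:R)) - n • (1:R) := by
        rw [sup_sub, sub_self]
      rw [posPart_def, e]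
      have := inf_add_sup x (n • (1:R))
      calc x ⊓ n • (1:R) + ((x ⊔ n • (1:R)) - n • (1:R))
          = (x ⊓ n • (1:R) + (x ⊔ n • (1:R))) - n • (1:R) := by abel
        _ = (x + n • (1:R)) - n • (1:R) := by rw [this]
        _ = x := by abel
    have hsa : an + al = a := hsplit a
    have hsb : bn + be = b := hsplit b
    have hbdd : an * bn = bn * an :=
      keyEq an bn n n han0 hbn0 inf_le_right inf_le_right
    have hdecomp := frDecomp an al bn be
    rw [hsa, hsb] at hdecomp
    have hzero : an * bn - bn * an = 0 := sub_eq_zero_of_eq hbdd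
    rw [hzero, add_zero] at hdecomp
    -- c ≤ an*be + al*bn + al*be
    have hcle : c ≤ an * be + al * bn + al * be := by
      rw [hc, hdecomp]
      refine add_le_add (add_le_add ?_ ?_) ?_
      · exact sub_le_self _ (hmul _ _ hbe0 han0)
      · exact sub_le_self _ (hmul _ _ hbn0 hal0)
      · exact sub_le_self _ (hmul _ _ hbe0 hal0)
    have hbeb : be ≤ b := by
      rw [hbe, posPart_def]
      exact sup_le (sub_le_self b (nsmul_nonneg h1 n)) hb
    have t1 : n • (an * be) ≤ a * (b * b) := by
      have e1 : an * be ≤ a * be := frMulR hmul be hbe0 inf_le_left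
      calc n • (an * be) ≤ n • (a * be) := nsmul_le_nsmul_right e1 n
        _ = a * (n • be) := (mul_smul_comm n a be).symm
        _ ≤ a * (b * b) := frMulL hmul a ha (frSmall hmul hf hb n)
    have t2 : n • (al * bn) ≤ (a * a) * b := by
      have e1 : al * bn ≤ al * b := frMulL hmul al hal0 inf_le_left
      calc n • (al * bn) ≤ n • (al * b) := nsmul_le_nsmul_right e1 n
        _ = (n • al) * b := (smul_mul_assoc n al b).symm
        _ ≤ (a * a) * b := frMulR hmul b hb (frSmall hmul hf ha n)
    have t3 : n • (al * be) ≤ (a * a) * b := by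
      have e1 : al * be ≤ al * b := frMulL hmul al hal0 hbeb
      calc n • (al * be) ≤ n • (al * b) := nsmul_le_nsmul_right e1 n
        _ = (n • al) * b := (smul_mul_assoc n al b).symm
        _ ≤ (a * a) * b := frMulR hmul b hb (frSmall hmul hf ha n)
    calc n • c ≤ n • (an * be + al * bn + al * be) := nsmul_le_nsmul_right hcle n
      _ = n • (an * be) + n • (al * bn) + n • (al * be) := by
          rw [smul_add, smul_add]
      _ ≤ a * (b * b) + ((a * a) * b + (a * a) * b) := by
          have := add_le_add (add_le_add t1 t2) t3
          calc n • (an * be) + n • (al * bn) + n • (al * be)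
              ≤ a * (b * b) + (a * a) * b + (a * a) * b := this
            _ = a * (b * b) + ((a * a) * b + (a * a) * b) := by abel
  have commPos : ∀ a b : R, 0 ≤ a → 0 ≤ b → a * b = b * a := by
    intro a b ha hb
    exact le_antisymm (sub_nonpos.mp (hmain a b ha hb)) (sub_nonpos.mp (hmain b a hb ha))
  intro x y
  have c1 : x⁺ * y⁺ = y⁺ * x⁺ := commPos _ _ (posPart_nonneg x) (posPart_nonneg y)
  have c2 : x⁺ * y⁻ = y⁻ * x⁺ := commPos _ _ (posPart_nonneg x) (negPart_nonneg y)
  have c3 : x⁻ * y⁺ = y⁺ * x⁻ := commPos _ _ (negPart_nonneg x) (posPart_nonneg y)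
  have c4 : x⁻ * y⁻ = y⁻ * x⁻ := commPos _ _ (negPart_nonneg x) (negPart_nonneg y)
  have ex : x⁺ - x⁻ = x := posPart_sub_negPart x
  have ey : y⁺ - y⁻ = y := posPart_sub_negPart y
  calc x * y = (x⁺ - x⁻) * (y⁺ - y⁻) := by rw [ex, ey]
    _ = x⁺ * y⁺ - x⁺ * y⁻ - x⁻ * y⁺ + x⁻ * y⁻ := by noncomm_ring
    _ = y⁺ * x⁺ - y⁻ * x⁺ - y⁺ * x⁻ + y⁻ * x⁻ := by rw [c1, c2, c3, c4]
    _ = (y⁺ - y⁻) * (x⁺ - x⁻) := by noncomm_ring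
    _ = y * x := by rw [ex, ey]
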